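/- arXiv:1107.5197 — 3 statements merged into one kernel-verified Lean document; each statement's English description precedes it below -/
import Mathlib

section
/- Let X be a d-dimensional Brownian motion, t > 0, p > 1 with conjugate exponent p*, and M_t ∈ L^p σ(X_t)-measurable. Define f(z) = E[M_t exp((z·X_t − zᵀz/2)/t)] for z ∈ ℂ^d. Then |f(z)| ≤ ‖M_t‖_p exp(((p*−1)∨1)|z|²/(2t)) for all z ∈ ℂ^d; in particular f is an entire function of order at most 2. -/
open MeasureTheory ProbabilityTheory Filter

noncomputable section

/-- Space-time Hermite polynomials `H n t x` (with variance parameter `t`), defined by the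
standard recurrence `H_{n+1}(t,x) = x H_n(t,x) - t n H_{n-1}(t,x)`; equivalently characterized
by the generating function `exp (a x - a² t / 2) = ∑ aⁿ H_n(t,x) / n!`. -/
def hermitePoly : ℕ → ℝ → ℝ → ℝ
  | 0, _, _ => 1
  | 1, _, x => x
  | (n + 2), t, x => x * hermitePoly (n + 1) t x - t * (n + 1) * hermitePoly n t x

/-- `X` is a standard one-dimensional Brownian motion on `(Ω, P)`. -/
def IsBrownianMotion {Ω : Type*} [MeasurableSpace Ω] (P : Measure Ω) (X : ℝ → Ω → ℝ) : Prop :=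
  (∀ ω, X 0 ω = 0) ∧
  (∀ t, Measurable (X t)) ∧
  (∀ ω, Continuous fun t => X t ω) ∧
  (∀ s t : ℝ, 0 ≤ s → s ≤ t →
    Measure.map (fun ω => X t ω - X s ω) P = gaussianReal 0 (Real.toNNReal (t - s))) ∧
  (∀ (n : ℕ) (u : ℕ → ℝ), Monotone u → 0 ≤ u 0 →
    iIndepFun
      (fun i : Fin n => fun ω => X (u (i.1 + 1)) ω - X (u i.1) ω) P)

/-- The sigma-field generated by the process `X` up to time `t`. -/
def pastSigma {Ω : Type*} [MeasurableSpace Ω] (X : ℝ → Ω → ℝ) (t : ℝ) : MeasurableSpace Ω :=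
  ⨆ s ∈ Set.Icc (0 : ℝ) t, MeasurableSpace.comap (X s) inferInstance

/-- `X` is a standard `d`-dimensional Brownian motion: each coordinate is a Brownian motion and
the coordinate processes are independent. -/
def IsBrownianMotionD {Ω : Type*} [MeasurableSpace Ω] (d : ℕ) (P : Measure Ω)
    (X : ℝ → Ω → Fin d → ℝ) : Prop :=
  (∀ i : Fin d, IsBrownianMotion P (fun t ω => X t ω i)) ∧
  iIndep (fun i : Fin d => ⨆ t : ℝ, MeasurableSpace.comap (fun ω => X t ω i) inferInstance) P
open Real
open scoped NNReal ENNReal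

lemma integral_complex_ofReal' {α : Type*} [MeasurableSpace α] {μ : MeasureTheory.Measure α}
    {f : α → ℝ} : ∫ x, ((f x : ℝ) : ℂ) ∂μ = ((∫ x, f x ∂μ : ℝ) : ℂ) := integral_ofReal

lemma integrable_rexp_quad {b : ℝ} (hb : 0 < b) (c : ℝ) :
    Integrable (fun x : ℝ => Real.exp (-b * x ^ 2 + c * x)) := by
  have h := (integrable_cexp_quadratic (b := (b : ℂ)) (by simpa using hb) (c : ℂ) 0).norm
  refine h.congr (Filter.Eventually.of_forall fun x => ?_)
  show ‖Complex.exp _‖ = _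
  rw [show ((-(b:ℂ)) * (x:ℂ) ^ 2 + (c:ℂ) * x + 0) = ((-b * x ^ 2 + c * x : ℝ) : ℂ) by
    push_cast; ring]
  rw [← Complex.ofReal_exp, Complex.norm_real, Real.norm_of_nonneg (Real.exp_pos _).le]

lemma integral_rexp_quad {b : ℝ} (hb : 0 < b) (c : ℝ) :
    ∫ x : ℝ, Real.exp (-b * x ^ 2 + c * x) = Real.sqrt (π / b) * Real.exp (c ^ 2 / (4 * b)) := by
  have h := integral_cexp_quadratic (b := (-b : ℂ)) (by simpa using hb) (c : ℂ) 0
  have h1 : ∀ x : ℝ, Complex.exp ((-b : ℂ) * (x : ℂ) ^ 2 + (c : ℂ) * x + 0)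
      = ((Real.exp (-b * x ^ 2 + c * x) : ℝ) : ℂ) := fun x => by
    rw [show ((-b : ℂ) * (x : ℂ) ^ 2 + (c : ℂ) * x + 0) = ((-b * x ^ 2 + c * x : ℝ) : ℂ) by
      push_cast; ring, Complex.ofReal_exp]
  simp_rw [h1] at h
  rw [integral_complex_ofReal'] at h
  have h2 : ((π : ℂ) / -(-b : ℂ)) ^ (1 / 2 : ℂ) = ((Real.sqrt (π / b) : ℝ) : ℂ) := by
    rw [Real.sqrt_eq_rpow,
      show ((π : ℂ) / -(-b : ℂ)) = ((π / b : ℝ) : ℂ) by push_cast; ring,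
      Complex.ofReal_cpow (by positivity)]
    norm_num
  have h3 : (0 : ℂ) - (c : ℂ) ^ 2 / (4 * (-b : ℂ)) = ((c ^ 2 / (4 * b) : ℝ) : ℂ) := by
    push_cast
    field_simp
    ring
  rw [h2, h3, ← Complex.ofReal_exp, ← Complex.ofReal_mul] at h
  exact_mod_cast h

lemma gaussianPDFReal_mul_exp (v : ℝ≥0) (hv : v ≠ 0) (a : ℝ) (x : ℝ) :
    gaussianPDFReal 0 v x * Real.exp (a * x)
      = (Real.sqrt (2 * π * v))⁻¹ * Real.exp (-(2 * (v : ℝ))⁻¹ * x ^ 2 + a * x) := by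
  have hv' : (0 : ℝ) < v := lt_of_le_of_ne v.coe_nonneg (by exact_mod_cast (Ne.symm hv))
  rw [gaussianPDFReal_def, mul_assoc, ← Real.exp_add]
  congr 1
  field_simp
  congr 1
  ring

lemma integrable_exp_mul_gaussianReal (v : ℝ≥0) (hv : v ≠ 0) (a : ℝ) :
    Integrable (fun x => Real.exp (a * x)) (gaussianReal 0 v) := by
  have hv' : (0 : ℝ) < v := lt_of_le_of_ne v.coe_nonneg (by exact_mod_cast (Ne.symm hv))
  rw [gaussianReal_of_var_ne_zero 0 hv,
    show gaussianPDF 0 v = fun x => ((Real.toNNReal (gaussianPDFReal 0 v x) : ℝ≥0) : ℝ≥0∞)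
      from rfl,
    integrable_withDensity_iff_integrable_smul ((measurable_gaussianPDFReal 0 v).real_toNNReal)]
  refine (((integrable_rexp_quad (b := (2 * (v : ℝ))⁻¹) (by positivity) a).const_mul
      (Real.sqrt (2 * π * v))⁻¹)).congr (Filter.Eventually.of_forall fun x => ?_)
  dsimp only
  rw [NNReal.smul_def, smul_eq_mul, Real.coe_toNNReal _ (gaussianPDFReal_nonneg 0 v x),
    gaussianPDFReal_mul_exp v hv a x]

lemma integral_exp_mul_gaussianReal (v : ℝ≥0) (hv : v ≠ 0) (a : ℝ) :
    ∫ x, Real.exp (a * x) ∂(gaussianReal 0 v) = Real.exp ((v : ℝ) * a ^ 2 / 2) := by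
  have hv' : (0 : ℝ) < v := lt_of_le_of_ne v.coe_nonneg (by exact_mod_cast (Ne.symm hv))
  rw [gaussianReal_of_var_ne_zero 0 hv,
    show gaussianPDF 0 v = fun x => ((Real.toNNReal (gaussianPDFReal 0 v x) : ℝ≥0) : ℝ≥0∞)
      from rfl,
    integral_withDensity_eq_integral_smul ((measurable_gaussianPDFReal 0 v).real_toNNReal)]
  have : ∀ x : ℝ, Real.toNNReal (gaussianPDFReal 0 v x) • Real.exp (a * x)
      = (Real.sqrt (2 * π * v))⁻¹ * Real.exp (-(2 * (v : ℝ))⁻¹ * x ^ 2 + a * x) := fun x => by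
    rw [NNReal.smul_def, smul_eq_mul, Real.coe_toNNReal _ (gaussianPDFReal_nonneg 0 v x),
      gaussianPDFReal_mul_exp v hv a x]
  simp_rw [this]
  rw [integral_const_mul, integral_rexp_quad (by positivity) a,
    show π / (2 * (v : ℝ))⁻¹ = 2 * π * v by field_simp,
    show a ^ 2 / (4 * (2 * (v : ℝ))⁻¹) = (v : ℝ) * a ^ 2 / 2 by field_simp; ring]
  rw [← mul_assoc, inv_mul_cancel₀ (Real.sqrt_pos.mpr (by positivity)).ne', one_mul]

lemma iIndep_mono' {Ω ι : Type*} [MeasurableSpace Ω] {P : Measure Ω}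
    {m m' : ι → MeasurableSpace Ω} (h : iIndep m P) (hle : ∀ i, m' i ≤ m i) : iIndep m' P := by
  rw [iIndep_iff] at h ⊢
  intro S s hs
  exact h S (fun i hi => hle i _ (hs i hi))

lemma exp_lin_comb {Ω : Type*} [MeasurableSpace Ω] {P : Measure Ω} [IsProbabilityMeasure P]
    {d : ℕ} {X : ℝ → Ω → Fin d → ℝ} (hX : IsBrownianMotionD d P X)
    {t : ℝ} (ht : 0 < t) (a : Fin d → ℝ) :
    Integrable (fun ω => Real.exp (∑ i, a i * X t ω i)) P ∧
    ∫ ω, Real.exp (∑ i, a i * X t ω i) ∂P = Real.exp (t * (∑ i, (a i) ^ 2) / 2) := by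
  have hvne : Real.toNNReal t ≠ 0 := by
    simp only [ne_eq, Real.toNNReal_eq_zero, not_le]
    exact ht
  have hcoe : ((Real.toNNReal t : ℝ≥0) : ℝ) = t := Real.coe_toNNReal t ht.le
  have hmeas : ∀ i : Fin d, Measurable fun ω => X t ω i := fun i => (hX.1 i).2.1 t
  have hmap : ∀ i : Fin d, Measure.map (fun ω => X t ω i) P = gaussianReal 0 (Real.toNNReal t) := by
    intro i
    have h4 := (hX.1 i).2.2.2.1 0 t le_rfl ht.le
    rw [show (fun ω => X t ω i - X 0 ω i) = fun ω => X t ω i from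
      funext fun ω => by
        have h0 : X 0 ω i = 0 := (hX.1 i).1 ω
        rw [h0, sub_zero], sub_zero] at h4
    exact h4
  -- independence of the coordinates at time t
  have hIF : iIndepFun
      (fun i : Fin d => fun ω => X t ω i) P := by
    rw [iIndepFun_iff_iIndep]
    exact iIndep_mono' hX.2 fun i =>
      le_iSup (fun s : ℝ => MeasurableSpace.comap (fun ω => X s ω i) inferInstance) t
  have hW : iIndepFun
      (fun i : Fin d => fun ω => a i * X t ω i) P :=
    hIF.comp (fun i (x : ℝ) => a i * x) fun i => measurable_id.const_mul (a i)
  have hWmeas : ∀ i : Fin d, Measurable fun ω => a i * X t ω i :=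
    fun i => (hmeas i).const_mul (a i)
  have hint1 : ∀ i : Fin d, Integrable (fun ω => Real.exp (1 * (a i * X t ω i))) P := by
    intro i
    simp_rw [one_mul]
    have hg : Integrable (fun x => Real.exp (a i * x)) (gaussianReal 0 (Real.toNNReal t)) :=
      integrable_exp_mul_gaussianReal _ hvne _
    rw [← hmap i] at hg
    exact (integrable_map_measure hg.aestronglyMeasurable (hmeas i).aemeasurable).mp hg
  have hval1 : ∀ i : Fin d, ∫ ω, Real.exp (a i * X t ω i) ∂P = Real.exp (t * (a i) ^ 2 / 2) := by
    intro i
    have him := integral_map (φ := fun ω => X t ω i) (f := fun x => Real.exp (a i * x))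
      (hmeas i).aemeasurable
      (by rw [hmap i]
          exact ((measurable_id.const_mul (a i)).exp.aestronglyMeasurable))
    rw [hmap i, integral_exp_mul_gaussianReal _ hvne, hcoe] at him
    exact him.symm
  have hintS := hW.integrable_exp_mul_sum (t := 1) hWmeas (s := Finset.univ) fun i _ => hint1 i
  have hkey : (fun ω => Real.exp (1 * (∑ i : Fin d, (fun i => fun ω => a i * X t ω i) i) ω))
      = fun ω => Real.exp (∑ i, a i * X t ω i) := by
    funext ω
    simp [Finset.sum_apply]
  rw [hkey] at hintS
  refine ⟨hintS, ?_⟩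
  have hmgf := hW.mgf_sum (t := 1) hWmeas Finset.univ
  simp only [mgf, one_mul, Finset.sum_apply] at hmgf
  rw [show ∫ ω, Real.exp (∑ i, a i * X t ω i) ∂P
      = ∫ ω, Real.exp (∑ i ∈ Finset.univ, (fun i => fun ω => a i * X t ω i) i ω) ∂P from rfl]
  rw [hmgf]
  have : ∀ i : Fin d, ∫ ω, Real.exp (a i * X t ω i) ∂P = Real.exp (t * (a i) ^ 2 / 2) := hval1
  rw [Finset.prod_congr rfl fun i _ => this i, ← Real.exp_sum]
  congr 1
  rw [Finset.mul_sum, Finset.sum_div]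

lemma rexp_rpow (x y : ℝ) : (Real.exp x) ^ y = Real.exp (x * y) := by
  rw [Real.rpow_def_of_pos (Real.exp_pos x), Real.log_exp]


/-- for `M ∈ L^p` measurable w.r.t. `σ(X_t)`, the function
`f(z) = E[M exp((z·X_t − zᵀz/2)/t)]` satisfies
`|f(z)| ≤ ‖M‖_p exp(((p*−1) ∨ 1) |z|² / (2t))`, so `f` is entire of order at most 2. -/
theorem widder_type_growth_bound {Ω : Type*} [MeasurableSpace Ω] (P : Measure Ω)
    [IsProbabilityMeasure P] {d : ℕ} (X : ℝ → Ω → Fin d → ℝ) (hX : IsBrownianMotionD d P X)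
    (t p : ℝ) (ht : 0 < t) (hp : 1 < p)
    (M : Ω → ℝ) (hM : MemLp M (ENNReal.ofReal p) P)
    (hMmeas : Measurable[MeasurableSpace.comap (X t) inferInstance] M)
    (z : Fin d → ℂ) :
    ‖(∫ ω, (M ω : ℂ) *
          Complex.exp ((∑ i, z i * (X t ω i : ℂ) - (∑ i, (z i) ^ 2) / 2) / (t : ℂ)) ∂P)‖
      ≤ (eLpNorm M (ENNReal.ofReal p) P).toReal *
        Real.exp (max (p / (p - 1) - 1) 1 * (∑ i, ‖z i‖ ^ 2) / (2 * t)) := by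
  classical
  have hp0 : 0 < p := lt_trans one_pos hp
  set q : ℝ := p / (p - 1) with hqdef
  have hpq : p.HolderConjugate q := Real.HolderConjugate.conjExponent hp
  have hq1 : 1 < q := hpq.symm.lt
  have hq0 : 0 < q := lt_trans one_pos hq1
  set r : Fin d → ℝ := fun i => (z i).re with hrdef
  set Sre : ℝ := (∑ i, (z i) ^ 2).re with hSdef
  set g : Ω → ℝ := fun ω => Real.exp ((∑ i, r i * X t ω i - Sre / 2) / t) with hgdef
  have hmeasX : ∀ i : Fin d, Measurable fun ω => X t ω i := fun i => (hX.1 i).2.1 t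
  have hgmeas : Measurable g := by
    apply Real.measurable_exp.comp
    apply Measurable.div_const
    apply Measurable.sub_const
    exact Finset.measurable_sum _ fun i _ => (hmeasX i).const_mul (r i)
  have habs : ∀ ω, ‖(M ω : ℂ) *
      Complex.exp ((∑ i, z i * (X t ω i : ℂ) - (∑ i, (z i) ^ 2) / 2) / (t : ℂ))‖ =
      |M ω| * g ω := by
    intro ω
    rw [norm_mul, Complex.norm_real, Real.norm_eq_abs, Complex.norm_exp]
    congr 2
    rw [Complex.div_ofReal_re, Complex.sub_re, Complex.re_sum,
      show ((2 : ℂ)) = ((2 : ℝ) : ℂ) from by norm_num, Complex.div_ofReal_re]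
    congr 2
    exact Finset.sum_congr rfl fun i _ => by
      rw [Complex.mul_re, Complex.ofReal_re, Complex.ofReal_im, mul_zero, sub_zero]
  -- the q-th power of g
  have hgq : ∀ ω, g ω ^ q =
      Real.exp (-(Sre * q) / (2 * t)) * Real.exp (∑ i, (q * r i / t) * X t ω i) := by
    intro ω
    rw [hgdef]
    rw [rexp_rpow, ← Real.exp_add]
    congr 1
    rw [show ∑ i, q * r i / t * X t ω i = (q / t) * ∑ i, r i * X t ω i from by
      rw [Finset.mul_sum]; exact Finset.sum_congr rfl fun i _ => by ring]
    field_simp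
    ring
  have hlin := exp_lin_comb hX ht fun i => q * r i / t
  have hgq_int : Integrable (fun ω => g ω ^ q) P := by
    refine ((hlin.1.const_mul (Real.exp (-(Sre * q) / (2 * t)))).congr
      (Filter.Eventually.of_forall fun ω => ?_))
    dsimp only
    exact (hgq ω).symm
  have hgmem : MemLp g (ENNReal.ofReal q) P := by
    refine ⟨hgmeas.aestronglyMeasurable, ?_⟩
    rw [eLpNorm_eq_lintegral_rpow_enorm_toReal (by simpa [ENNReal.ofReal_eq_zero, not_le] using hq0)
      ENNReal.ofReal_ne_top]
    refine ENNReal.rpow_lt_top_of_nonneg (by positivity) ?_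
    rw [ENNReal.toReal_ofReal hq0.le]
    have hpt : ∀ ω, ‖g ω‖ₑ ^ q = ENNReal.ofReal (g ω ^ q) := by
      intro ω
      rw [← ofReal_norm, Real.norm_of_nonneg (Real.exp_pos _).le,
        ← ENNReal.ofReal_rpow_of_nonneg (Real.exp_pos _).le hq0.le]
    rw [lintegral_congr hpt]
    exact hgq_int.lintegral_lt_top.ne
  have hMnorm : MemLp (fun ω => |M ω|) (ENNReal.ofReal p) P := by
    simpa [Real.norm_eq_abs] using hM.norm
  have hholder := integral_mul_le_Lp_mul_Lq_of_nonneg hpq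
    (Filter.Eventually.of_forall fun ω => abs_nonneg (M ω))
    (Filter.Eventually.of_forall fun ω => (Real.exp_pos _).le) hMnorm hgmem
  -- identify the p-factor with the Lp norm
  have hsn : (∫ ω, |M ω| ^ p ∂P) ^ (1 / p) = (eLpNorm M (ENNReal.ofReal p) P).toReal := by
    rw [hM.eLpNorm_eq_integral_rpow_norm (by simpa [ENNReal.ofReal_eq_zero, not_le] using hp0)
      ENNReal.ofReal_ne_top]
    rw [ENNReal.toReal_ofReal (Real.rpow_nonneg (integral_nonneg fun ω => by positivity) _)]
    rw [ENNReal.toReal_ofReal hp0.le]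
    simp [Real.norm_eq_abs, one_div]
  -- compute the q-factor
  have hR : ∑ i, (q * r i / t) ^ 2 = q ^ 2 / t ^ 2 * ∑ i, r i ^ 2 := by
    rw [Finset.mul_sum]
    exact Finset.sum_congr rfl fun i _ => by field_simp
  have hqfac : (∫ ω, g ω ^ q ∂P) ^ (1 / q)
      = Real.exp ((q * (∑ i, r i ^ 2) - Sre) / (2 * t)) := by
    have h1 : ∫ ω, g ω ^ q ∂P
        = Real.exp (-(Sre * q) / (2 * t) + t * (∑ i, (q * r i / t) ^ 2) / 2) := by
      rw [integral_congr_ae (Filter.Eventually.of_forall hgq), integral_const_mul, hlin.2,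
        ← Real.exp_add]
    rw [h1, rexp_rpow]
    congr 1
    rw [hR]
    field_simp
    ring
  -- final exponent comparison
  have hexp_le : (q * (∑ i, r i ^ 2) - Sre) / (2 * t)
      ≤ max (q - 1) 1 * (∑ i, ‖z i‖ ^ 2) / (2 * t) := by
    have hnum : q * (∑ i, r i ^ 2) - Sre ≤ max (q - 1) 1 * ∑ i, ‖z i‖ ^ 2 := by
      rw [hSdef, Complex.re_sum, Finset.mul_sum, Finset.mul_sum, ← Finset.sum_sub_distrib]
      refine Finset.sum_le_sum fun i _ => ?_
      have hre : ((z i) ^ 2).re = r i ^ 2 - (z i).im ^ 2 := by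
        rw [sq, Complex.mul_re]; ring
      have habs2 : ‖z i‖ ^ 2 = r i ^ 2 + (z i).im ^ 2 := by
        rw [Complex.sq_norm, Complex.normSq_apply]; ring
      rw [hre, habs2]
      have h1 : q - 1 ≤ max (q - 1) 1 := le_max_left _ _
      have h2 : (1 : ℝ) ≤ max (q - 1) 1 := le_max_right _ _
      nlinarith [sq_nonneg (r i), sq_nonneg ((z i).im)]
    exact div_le_div_of_nonneg_right hnum (by positivity) |>.trans_eq rfl
  calc ‖(∫ ω, (M ω : ℂ) *
          Complex.exp ((∑ i, z i * (X t ω i : ℂ) - (∑ i, (z i) ^ 2) / 2) / (t : ℂ)) ∂P)‖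
      ≤ ∫ ω, ‖(M ω : ℂ) *
          Complex.exp ((∑ i, z i * (X t ω i : ℂ) - (∑ i, (z i) ^ 2) / 2) / (t : ℂ))‖ ∂P := by
        exact norm_integral_le_integral_norm
          (fun ω => (M ω : ℂ) *
            Complex.exp ((∑ i, z i * (X t ω i : ℂ) - (∑ i, (z i) ^ 2) / 2) / (t : ℂ))) (μ := P)
    _ = ∫ ω, |M ω| * g ω ∂P := integral_congr_ae (Filter.Eventually.of_forall habs)
    _ ≤ (∫ ω, |M ω| ^ p ∂P) ^ (1 / p) * (∫ ω, g ω ^ q ∂P) ^ (1 / q) := hholder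
    _ = (eLpNorm M (ENNReal.ofReal p) P).toReal
          * Real.exp ((q * (∑ i, r i ^ 2) - Sre) / (2 * t)) := by rw [hsn, hqfac]
    _ ≤ (eLpNorm M (ENNReal.ofReal p) P).toReal *
        Real.exp (max (q - 1) 1 * (∑ i, ‖z i‖ ^ 2) / (2 * t)) := by
        exact mul_le_mul_of_nonneg_left (Real.exp_le_exp.mpr hexp_le) ENNReal.toReal_nonneg
end
end

section
/- Fix T > 0, k > 0, and a one-dimensional Brownian motion X. For every probability measure μ on ℝ and every 0 ≤ t ≤ T, the martingale N_t = ∫_ℝ 𝓔(vX)_t μ(dv) satisfies E[sin(kX_t) N_t] ≥ −e^{−k²t/2}. -/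
open MeasureTheory ProbabilityTheory Filter

noncomputable section

namespace WidderAux

open Real
open scoped NNReal ENNReal

lemma integrable_exp_quadratic {b : ℝ} (hb : b < 0) (c d : ℝ) :
    Integrable fun x : ℝ => Real.exp (b * x ^ 2 + c * x + d) := by
  have h := (integrable_cexp_quadratic' (b := (b : ℂ)) (by simpa using hb) (c : ℂ) (d : ℂ)).re
  refine h.congr (Filter.Eventually.of_forall fun x => ?_)
  have hx : ((b : ℂ) * x ^ 2 + c * x + d) = ((b * x ^ 2 + c * x + d : ℝ) : ℂ) := by
    push_cast; ring
  simp only [RCLike.re_to_complex]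
  rw [hx, ← Complex.ofReal_exp, Complex.ofReal_re]

lemma pdf_mul (t : ℝ) (ht : 0 < t) (x A : ℝ) :
    gaussianPDFReal 0 t.toNNReal x * Real.exp A
      = (Real.sqrt (2 * π * t))⁻¹ * Real.exp (-(1 / (2 * t)) * x ^ 2 + A) := by
  have hco : ((t.toNNReal : ℝ≥0) : ℝ) = t := Real.coe_toNNReal t ht.le
  have htne : t ≠ 0 := ht.ne'
  have harg : -(x - 0) ^ 2 / (2 * t) + A = -(1 / (2 * t)) * x ^ 2 + A := by
    field_simp
    ring
  rw [gaussianPDFReal, hco, mul_assoc, ← Real.exp_add, harg]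

lemma integral_gaussianReal' {E : Type*} [NormedAddCommGroup E] [NormedSpace ℝ E]
    (t : ℝ) (ht : 0 < t) (g : ℝ → E) :
    ∫ x, g x ∂(gaussianReal 0 t.toNNReal)
      = ∫ x, gaussianPDFReal 0 t.toNNReal x • g x := by
  have hσ : t.toNNReal ≠ 0 := (Real.toNNReal_pos.mpr ht).ne'
  rw [gaussianReal_of_var_ne_zero _ hσ]
  have hd : gaussianPDF 0 t.toNNReal
      = fun x => (((gaussianPDFReal 0 t.toNNReal x).toNNReal : ℝ≥0) : ℝ≥0∞) := rfl
  rw [hd, integral_withDensity_eq_integral_smul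
    ((measurable_gaussianPDFReal 0 t.toNNReal).real_toNNReal) g]
  congr 1
  funext x
  rw [NNReal.smul_def, Real.coe_toNNReal _ (gaussianPDFReal_nonneg _ _ _)]

lemma integrable_gaussianReal_iff (t : ℝ) (ht : 0 < t) (g : ℝ → ℝ) :
    Integrable g (gaussianReal 0 t.toNNReal)
      ↔ Integrable (fun x => gaussianPDFReal 0 t.toNNReal x * g x) := by
  have hσ : t.toNNReal ≠ 0 := (Real.toNNReal_pos.mpr ht).ne'
  rw [gaussianReal_of_var_ne_zero _ hσ]
  have hd : gaussianPDF 0 t.toNNReal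
      = fun x => (((gaussianPDFReal 0 t.toNNReal x).toNNReal : ℝ≥0) : ℝ≥0∞) := rfl
  rw [hd, integrable_withDensity_iff_integrable_smul
    ((measurable_gaussianPDFReal 0 t.toNNReal).real_toNNReal)]
  have : (fun x => ((gaussianPDFReal 0 t.toNNReal x).toNNReal : ℝ≥0) • g x)
      = fun x => gaussianPDFReal 0 t.toNNReal x * g x := by
    funext x
    rw [NNReal.smul_def, Real.coe_toNNReal _ (gaussianPDFReal_nonneg _ _ _), smul_eq_mul]
  rw [this]

lemma key_complex (t : ℝ) (ht : 0 < t) (c d : ℂ) :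
    ∫ x : ℝ, Complex.exp (((-(1 / (2 * t)) : ℝ) : ℂ) * x ^ 2 + c * x + d)
      = ((Real.sqrt (2 * π * t) : ℝ) : ℂ) * Complex.exp (d + c ^ 2 * t / 2) := by
  have hb : ((-(1 / (2 * t)) : ℝ) : ℂ).re < 0 := by
    simp only [Complex.ofReal_re]
    have : (0:ℝ) < 1 / (2 * t) := by positivity
    linarith
  rw [integral_cexp_quadratic hb c d]
  have ht' : (t : ℂ) ≠ 0 := by exact_mod_cast ht.ne'
  congr 1
  · have h1 : (↑π / -((-(1 / (2 * t)) : ℝ) : ℂ)) = ((2 * π * t : ℝ) : ℂ) := by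
      push_cast
      field_simp
    rw [h1, show ((1 : ℂ)/2) = ((1/2 : ℝ) : ℂ) by norm_num,
      ← Complex.ofReal_cpow (by positivity), Real.sqrt_eq_rpow]
  · congr 1
    push_cast
    field_simp
    ring


lemma exp_integrable (t : ℝ) (ht : 0 < t) (v c : ℝ) :
    Integrable (fun x => Real.exp (v * x + c)) (gaussianReal 0 t.toNNReal) := by
  rw [integrable_gaussianReal_iff t ht]
  have h : (fun x => gaussianPDFReal 0 t.toNNReal x * Real.exp (v * x + c))
      = fun x => (Real.sqrt (2 * π * t))⁻¹ * Real.exp (-(1 / (2 * t)) * x ^ 2 + (v * x + c)) := by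
    funext x
    rw [pdf_mul t ht]
  rw [h]
  have hb : -(1 / (2 * t)) < 0 := by
    have : (0:ℝ) < 1 / (2 * t) := by positivity
    linarith
  have := (integrable_exp_quadratic hb v c).const_mul (Real.sqrt (2 * π * t))⁻¹
  refine this.congr (Filter.Eventually.of_forall fun x => ?_)
  ring_nf

lemma gauss_mgf (t : ℝ) (ht : 0 < t) (v c : ℝ) :
    ∫ x, Real.exp (v * x + c) ∂(gaussianReal 0 t.toNNReal) = Real.exp (v ^ 2 * t / 2 + c) := by
  rw [integral_gaussianReal' t ht]
  have h : (fun x => gaussianPDFReal 0 t.toNNReal x • Real.exp (v * x + c))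
      = fun (x : ℝ) => (Real.sqrt (2 * π * t))⁻¹
          * (Complex.exp (((-(1 / (2 * t)) : ℝ) : ℂ) * (x : ℂ) ^ 2 + (v : ℂ) * (x : ℂ)
              + (c : ℂ))).re := by
    funext x
    rw [smul_eq_mul, pdf_mul t ht]
    have hz : (((-(1 / (2 * t)) : ℝ) : ℂ) * x ^ 2 + (v : ℂ) * x + (c : ℂ))
        = ((-(1 / (2 * t)) * x ^ 2 + (v * x + c) : ℝ) : ℂ) := by push_cast; ring
    rw [hz, ← Complex.ofReal_exp, Complex.ofReal_re]
  rw [h]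
  have hb : ((-(1 / (2 * t)) : ℝ) : ℂ).re < 0 := by
    simp only [Complex.ofReal_re]
    have : (0:ℝ) < 1 / (2 * t) := by positivity
    linarith
  rw [integral_const_mul]
  simp only [← RCLike.re_to_complex]
  rw [integral_re (integrable_cexp_quadratic' hb _ _)]
  simp only [RCLike.re_to_complex]
  rw [key_complex t ht]
  have hW : ((c : ℂ) + (v : ℂ) ^ 2 * t / 2) = ((v ^ 2 * t / 2 + c : ℝ) : ℂ) := by push_cast; ring
  rw [hW, ← Complex.ofReal_exp, ← Complex.ofReal_mul, Complex.ofReal_re]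
  have hs : Real.sqrt (2 * π * t) ≠ 0 := by positivity
  field_simp

lemma gauss_sin (t : ℝ) (ht : 0 < t) (k v : ℝ) :
    ∫ x, Real.sin (k * x) * Real.exp (v * x - v ^ 2 * t / 2) ∂(gaussianReal 0 t.toNNReal)
      = Real.exp (-(k ^ 2 * t / 2)) * Real.sin (k * v * t) := by
  rw [integral_gaussianReal' t ht]
  have h : (fun x => gaussianPDFReal 0 t.toNNReal x
        • (Real.sin (k * x) * Real.exp (v * x - v ^ 2 * t / 2)))
      = fun (x : ℝ) => (Real.sqrt (2 * π * t))⁻¹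
          * (Complex.exp (((-(1 / (2 * t)) : ℝ) : ℂ) * (x : ℂ) ^ 2
              + ((v : ℂ) + (k : ℂ) * Complex.I) * (x : ℂ)
              + ((-(v ^ 2 * t / 2) : ℝ) : ℂ))).im := by
    funext x
    rw [smul_eq_mul, mul_comm (Real.sin (k * x)), ← mul_assoc, pdf_mul t ht]
    have hre : (((-(1 / (2 * t)) : ℝ) : ℂ) * x ^ 2
        + ((v : ℂ) + (k : ℂ) * Complex.I) * x + ((-(v ^ 2 * t / 2) : ℝ) : ℂ)).re
        = -(1 / (2 * t)) * x ^ 2 + (v * x - v ^ 2 * t / 2) := by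
      simp [← Complex.ofReal_pow]
      try ring
    have him : (((-(1 / (2 * t)) : ℝ) : ℂ) * x ^ 2
        + ((v : ℂ) + (k : ℂ) * Complex.I) * x + ((-(v ^ 2 * t / 2) : ℝ) : ℂ)).im = k * x := by
      simp [← Complex.ofReal_pow]
    rw [Complex.exp_im, hre, him, mul_assoc]
  rw [h]
  have hb : ((-(1 / (2 * t)) : ℝ) : ℂ).re < 0 := by
    simp only [Complex.ofReal_re]
    have : (0:ℝ) < 1 / (2 * t) := by positivity
    linarith
  rw [integral_const_mul]
  simp only [← RCLike.im_to_complex]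
  rw [integral_im (integrable_cexp_quadratic' hb _ _)]
  simp only [RCLike.im_to_complex]
  rw [key_complex t ht]
  have ht' : (t : ℂ) ≠ 0 := by exact_mod_cast ht.ne'
  have hW : (((-(v ^ 2 * t / 2) : ℝ) : ℂ) + ((v : ℂ) + (k : ℂ) * Complex.I) ^ 2 * t / 2)
      = ((-(k ^ 2 * t / 2) : ℝ) : ℂ) + ((k * v * t : ℝ) : ℂ) * Complex.I := by
    rw [add_sq, mul_pow, Complex.I_sq]
    push_cast
    ring
  rw [hW]
  have hexp : (Complex.exp (((-(k ^ 2 * t / 2) : ℝ) : ℂ) + ((k * v * t : ℝ) : ℂ) * Complex.I)).im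
      = Real.exp (-(k ^ 2 * t / 2)) * Real.sin (k * v * t) := by
    rw [Complex.exp_im]
    simp [← Complex.ofReal_pow]
  have hs : Real.sqrt (2 * π * t) ≠ 0 := by positivity
  have him2 : (((Real.sqrt (2 * π * t) : ℝ) : ℂ)
        * Complex.exp (((-(k ^ 2 * t / 2) : ℝ) : ℂ) + ((k * v * t : ℝ) : ℂ) * Complex.I)).im
      = Real.sqrt (2 * π * t) * (Real.exp (-(k ^ 2 * t / 2)) * Real.sin (k * v * t)) := by
    rw [Complex.mul_im, hexp]
    simp
  rw [him2, ← mul_assoc, inv_mul_cancel₀ hs, one_mul]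


end WidderAux

open WidderAux

/-- for any probability measure `μ` on `ℝ` and `N_t = ∫ 𝓔(vX)_t μ(dv)`, one has
`E[sin(k X_t) N_t] ≥ −e^{−k²t/2}` for all `0 ≤ t ≤ T`. -/
theorem widder_sine_lower_bound {Ω : Type*} [MeasurableSpace Ω] (P : Measure Ω)
    [IsProbabilityMeasure P] (X : ℝ → Ω → ℝ) (hX : IsBrownianMotion P X)
    (T k : ℝ) (hT : 0 < T) (hk : 0 < k)
    (μ : Measure ℝ) [IsProbabilityMeasure μ] (t : ℝ) (ht0 : 0 ≤ t) (htT : t ≤ T) :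
    -Real.exp (-k ^ 2 * t / 2)
      ≤ ∫ ω, Real.sin (k * X t ω) * (∫ v, Real.exp (v * X t ω - v ^ 2 * t / 2) ∂μ) ∂P := by
  rcases eq_or_lt_of_le ht0 with h0 | ht
  · -- t = 0
    subst h0
    have hz : (fun ω => Real.sin (k * X 0 ω)
          * (∫ v, Real.exp (v * X 0 ω - v ^ 2 * 0 / 2) ∂μ)) = fun _ => (0:ℝ) := by
      funext ω
      rw [hX.1 ω]
      simp
    rw [hz, integral_zero]
    have := Real.exp_pos (-k ^ 2 * 0 / 2)
    linarith
  · set L := gaussianReal 0 t.toNNReal with hL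
    have hlaw : Measure.map (X t) P = L := by
      have h := hX.2.2.2.1 0 t le_rfl ht0
      have hfun : (fun ω => X t ω - X 0 ω) = X t := funext fun ω => by simp [hX.1 ω]
      rw [hfun, sub_zero] at h
      exact h
    have hcont : Continuous (fun p : ℝ × ℝ =>
        Real.sin (k * p.1) * Real.exp (p.2 * p.1 - p.2 ^ 2 * t / 2)) := by fun_prop
    have hsmc : StronglyMeasurable (fun x : ℝ => ∫ v, Real.exp (v * x - v ^ 2 * t / 2) ∂μ) := by
      refine StronglyMeasurable.integral_prod_right
        (f := fun (x : ℝ) (v : ℝ) => Real.exp (v * x - v ^ 2 * t / 2)) ?_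
      have hc : Continuous fun p : ℝ × ℝ => Real.exp (p.2 * p.1 - p.2 ^ 2 * t / 2) := by
        fun_prop
      exact hc.stronglyMeasurable
    have hGsm : StronglyMeasurable (fun x : ℝ =>
        Real.sin (k * x) * ∫ v, Real.exp (v * x - v ^ 2 * t / 2) ∂μ) :=
      ((Real.continuous_sin.comp (continuous_const.mul continuous_id)).stronglyMeasurable).mul hsmc
    have hmap : ∫ ω, Real.sin (k * X t ω) * (∫ v, Real.exp (v * X t ω - v ^ 2 * t / 2) ∂μ) ∂P
        = ∫ x, Real.sin (k * x) * (∫ v, Real.exp (v * x - v ^ 2 * t / 2) ∂μ) ∂L := by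
      rw [← hlaw, integral_map (hX.2.1 t).aemeasurable hGsm.aestronglyMeasurable]
    rw [hmap]
    have h1 : ∫ x, Real.sin (k * x) * (∫ v, Real.exp (v * x - v ^ 2 * t / 2) ∂μ) ∂L
        = ∫ x, ∫ v, Real.sin (k * x) * Real.exp (v * x - v ^ 2 * t / 2) ∂μ ∂L := by
      congr 1
      funext x
      exact (integral_const_mul _ _).symm
    have hbound : ∀ v x : ℝ, ‖Real.sin (k * x) * Real.exp (v * x - v ^ 2 * t / 2)‖
        ≤ Real.exp (v * x + -(v ^ 2 * t / 2)) := by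
      intro v x
      have harg : v * x - v ^ 2 * t / 2 = v * x + -(v ^ 2 * t / 2) := by ring
      rw [Real.norm_eq_abs, abs_mul, abs_of_pos (Real.exp_pos _), harg]
      have h1 := Real.neg_one_le_sin (k * x)
      have h2 := Real.sin_le_one (k * x)
      have h3 := Real.exp_pos (v * x + -(v ^ 2 * t / 2))
      have h4 : |Real.sin (k * x)| ≤ 1 := abs_le.mpr ⟨h1, h2⟩
      nlinarith [abs_nonneg (Real.sin (k * x))]
    have hint1 : ∀ v : ℝ, Integrable
        (fun x => Real.sin (k * x) * Real.exp (v * x - v ^ 2 * t / 2)) L := by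
      intro v
      have he : Integrable (fun x => Real.exp (v * x + -(v ^ 2 * t / 2))) L :=
        exp_integrable t ht v _
      refine he.mono' ?_ (Filter.Eventually.of_forall fun x => hbound v x)
      have hc : Continuous fun x : ℝ => Real.sin (k * x) * Real.exp (v * x - v ^ 2 * t / 2) := by
        fun_prop
      exact hc.stronglyMeasurable.aestronglyMeasurable
    have hmgf : ∀ v : ℝ, ∫ x, Real.exp (v * x + -(v ^ 2 * t / 2)) ∂L = 1 := by
      intro v
      rw [gauss_mgf t ht]
      norm_num
    have hFub : Integrable (Function.uncurry
        (fun (x v : ℝ) => Real.sin (k * x) * Real.exp (v * x - v ^ 2 * t / 2))) (L.prod μ) := by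
      refine (integrable_prod_iff' hcont.aestronglyMeasurable).mpr ⟨ae_of_all _ hint1, ?_⟩
      refine (integrable_const (1:ℝ)).mono'
        ((hcont.norm.stronglyMeasurable).integral_prod_left'.aestronglyMeasurable) ?_
      refine Filter.Eventually.of_forall fun v => ?_
      rw [Real.norm_eq_abs, abs_of_nonneg (integral_nonneg fun x => norm_nonneg _)]
      calc ∫ x, ‖Real.sin (k * x) * Real.exp (v * x - v ^ 2 * t / 2)‖ ∂L
          ≤ ∫ x, Real.exp (v * x + -(v ^ 2 * t / 2)) ∂L :=
            integral_mono (hint1 v).norm (exp_integrable t ht v _) (hbound v)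
        _ = 1 := hmgf v
    have h2 : ∫ x, ∫ v, Real.sin (k * x) * Real.exp (v * x - v ^ 2 * t / 2) ∂μ ∂L
        = ∫ v, ∫ x, Real.sin (k * x) * Real.exp (v * x - v ^ 2 * t / 2) ∂L ∂μ :=
      integral_integral_swap hFub
    rw [h1, h2]
    have h3 : (fun v : ℝ => ∫ x, Real.sin (k * x) * Real.exp (v * x - v ^ 2 * t / 2) ∂L)
        = fun v : ℝ => Real.exp (-(k ^ 2 * t / 2)) * Real.sin (k * v * t) := by
      funext v
      exact gauss_sin t ht k v
    rw [h3]
    have hIntf : Integrable (fun v => Real.exp (-(k ^ 2 * t / 2)) * Real.sin (k * v * t)) μ := by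
      refine (integrable_const (Real.exp (-(k ^ 2 * t / 2)))).mono'
        ((by fun_prop : Continuous (fun v : ℝ =>
          Real.exp (-(k ^ 2 * t / 2)) * Real.sin (k * v * t))).aestronglyMeasurable)
        (Filter.Eventually.of_forall fun v => ?_)
      rw [Real.norm_eq_abs, abs_mul, abs_of_pos (Real.exp_pos _)]
      have h4 : |Real.sin (k * v * t)| ≤ 1 :=
        abs_le.mpr ⟨Real.neg_one_le_sin _, Real.sin_le_one _⟩
      nlinarith [Real.exp_pos (-(k ^ 2 * t / 2)), abs_nonneg (Real.sin (k * v * t))]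
    have hmono : ∫ v, (-Real.exp (-k ^ 2 * t / 2)) ∂μ
        ≤ ∫ v, Real.exp (-(k ^ 2 * t / 2)) * Real.sin (k * v * t) ∂μ := by
      refine integral_mono (integrable_const _) hIntf fun v => ?_
      have h5 := Real.neg_one_le_sin (k * v * t)
      have h6 := Real.exp_pos (-(k ^ 2 * t / 2))
      have h7 : -k ^ 2 * t / 2 = -(k ^ 2 * t / 2) := by ring
      rw [h7]
      nlinarith
    calc -Real.exp (-k ^ 2 * t / 2) = ∫ _, (-Real.exp (-k ^ 2 * t / 2)) ∂μ := by
          rw [integral_const]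
          simp
      _ ≤ _ := hmono
end
end

section
/- Let X be a d-dimensional Brownian motion and μ a nonnegative finite measure on ℝ^d such that for all t ≥ 0, ∫∫ e^{t (v·w)} μ(dv) μ(dw) < ∞. Then μ has quadratic exponential moments of all orders: ∫ e^{λ|v|²} μ(dv) < ∞ for every λ > 0. -/
open MeasureTheory ProbabilityTheory Filter

noncomputable section

/-- if a nonnegative finite measure `μ` on `ℝ^d` satisfies
`∫∫ e^{t(v·w)} μ(dv) μ(dw) < ∞` for all `t ≥ 0`, then `μ` has quadratic exponential moments of
all orders: `∫ e^{λ|v|²} μ(dv) < ∞` for every `λ > 0`. -/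
theorem quadratic_exponential_moments {Ω : Type*} [MeasurableSpace Ω] (P : Measure Ω)
    [IsProbabilityMeasure P] {d : ℕ} (X : ℝ → Ω → Fin d → ℝ) (hX : IsBrownianMotionD d P X)
    (μ : Measure (Fin d → ℝ)) [IsFiniteMeasure μ]
    (h : ∀ t : ℝ, 0 ≤ t →
      (∫⁻ v, ∫⁻ w, ENNReal.ofReal (Real.exp (t * ∑ i, v i * w i)) ∂μ ∂μ) < ⊤) :
    ∀ lam : ℝ, 0 < lam → (∫⁻ v, ENNReal.ofReal (Real.exp (lam * ∑ i, v i ^ 2)) ∂μ) < ⊤ := by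
  intro lam hlam
  clear hX
  rcases Nat.eq_zero_or_pos d with hd | hd
  · subst hd
    simp only [Finset.univ_eq_empty, Finset.sum_empty, mul_zero, Real.exp_zero,
      ENNReal.ofReal_one, lintegral_one]
    exact measure_lt_top μ Set.univ
  have hd' : (d : ℝ) ≠ 0 := Nat.cast_ne_zero.2 hd.ne'
  set t : ℝ := 4 * d * lam with ht_def
  have ht : 0 ≤ t := by positivity
  set C : ENNReal := ∫⁻ v, ∫⁻ w, ENNReal.ofReal (Real.exp (t * ∑ i, v i * w i)) ∂μ ∂μ with hC_def
  have hC : C < ⊤ := h t ht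
  -- measurability of the dot product on the product space
  have hdot : Measurable fun p : (Fin d → ℝ) × (Fin d → ℝ) => ∑ i, p.1 i * p.2 i :=
    Finset.measurable_sum _ fun i _ =>
      ((measurable_pi_apply i).comp measurable_fst).mul
        ((measurable_pi_apply i).comp measurable_snd)
  have hfmeas : Measurable fun p : (Fin d → ℝ) × (Fin d → ℝ) =>
      ENNReal.ofReal (Real.exp (t * ∑ i, p.1 i * p.2 i)) :=
    ENNReal.measurable_ofReal.comp (Real.measurable_exp.comp (hdot.const_mul t))
  have hprod : (∫⁻ p : (Fin d → ℝ) × (Fin d → ℝ),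
      ENNReal.ofReal (Real.exp (t * ∑ i, p.1 i * p.2 i)) ∂(μ.prod μ)) = C := by
    rw [lintegral_prod _ hfmeas.aemeasurable]
  -- the tail bound
  have tail : ∀ K : ℝ, 0 ≤ K →
      μ {v : Fin d → ℝ | K ≤ ∑ i, v i ^ 2} ≤
        (Fintype.card (Fin d × (Fin d → Bool)) : ENNReal) * C ^ (1/2 : ℝ) *
          ENNReal.ofReal (Real.exp (-(2 * lam) * K)) := by
    intro K hK
    set K' : ℝ := K / d with hK'_def
    have hK' : 0 ≤ K' := div_nonneg hK (Nat.cast_nonneg d)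
    set A : Fin d × (Fin d → Bool) → Set (Fin d → ℝ) :=
      fun p => {v | K' ≤ (v p.1) ^ 2 ∧ ∀ j, if p.2 j then 0 ≤ v j else v j ≤ 0} with hA_def
    have hAmeas : ∀ p, MeasurableSet (A p) := by
      intro p
      have h1 : MeasurableSet {v : Fin d → ℝ | K' ≤ (v p.1) ^ 2} :=
        measurableSet_le measurable_const ((measurable_pi_apply p.1).pow measurable_const)
      have h2 : MeasurableSet {v : Fin d → ℝ | ∀ j, if p.2 j then 0 ≤ v j else v j ≤ 0} := by
        rw [Set.setOf_forall]
        apply MeasurableSet.iInter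
        intro j
        by_cases hj : p.2 j <;> simp only [hj, if_true, if_false]
        · exact measurableSet_le measurable_const (measurable_pi_apply j)
        · exact measurableSet_le (measurable_pi_apply j) measurable_const
      exact h1.inter h2
    -- cover the tail set by the sign-pattern sets
    have hcover : {v : Fin d → ℝ | K ≤ ∑ i, v i ^ 2} ⊆ ⋃ p, A p := by
      intro v hv
      obtain ⟨i, hi⟩ : ∃ i, K' ≤ (v i) ^ 2 := by
        by_contra hcon
        push_neg at hcon
        have h1 : (∑ i, v i ^ 2) < ∑ _i : Fin d, K' :=
          Finset.sum_lt_sum_of_nonempty (Finset.univ_nonempty_iff.2 ⟨⟨0, hd⟩⟩)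
            fun i _ => hcon i
        have h2 : (∑ _i : Fin d, K') = K := by
          rw [Finset.sum_const, Finset.card_univ, Fintype.card_fin, nsmul_eq_mul, hK'_def]
          field_simp
        rw [h2] at h1
        exact absurd hv (not_le.2 h1)
      refine Set.mem_iUnion.2 ⟨⟨i, fun j => decide (0 ≤ v j)⟩, hi, fun j => ?_⟩
      by_cases hj : 0 ≤ v j
      · simp [hj]
      · simp [hj, le_of_not_ge hj]
    -- each sign-pattern set has small measure
    have hbound : ∀ p, μ (A p) ≤ C ^ (1/2 : ℝ) * ENNReal.ofReal (Real.exp (-(2 * lam) * K)) := by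
      intro p
      -- the product A p ×ˢ A p sits inside the tail of the dot product
      have hsub : (A p) ×ˢ (A p) ⊆
          {q : (Fin d → ℝ) × (Fin d → ℝ) | K' ≤ ∑ i, q.1 i * q.2 i} := by
        rintro ⟨v, w⟩ ⟨⟨hv1, hv2⟩, hw1, hw2⟩
        have hterm : ∀ j, 0 ≤ v j * w j := by
          intro j
          have hvj := hv2 j; have hwj := hw2 j
          by_cases hσ : p.2 j
          · simp only [hσ, if_true] at hvj hwj
            exact mul_nonneg hvj hwj
          · rw [if_neg hσ] at hvj hwj
            nlinarith
        have hi : K' ≤ v p.1 * w p.1 := by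
          have h1 : Real.sqrt K' ≤ |v p.1| := by
            rw [← Real.sqrt_sq_eq_abs]; exact Real.sqrt_le_sqrt hv1
          have h2 : Real.sqrt K' ≤ |w p.1| := by
            rw [← Real.sqrt_sq_eq_abs]; exact Real.sqrt_le_sqrt hw1
          calc K' = Real.sqrt K' * Real.sqrt K' := (Real.mul_self_sqrt hK').symm
            _ ≤ |v p.1| * |w p.1| :=
                mul_le_mul h1 h2 (Real.sqrt_nonneg K') (abs_nonneg _)
            _ = |v p.1 * w p.1| := (abs_mul _ _).symm
            _ = v p.1 * w p.1 := abs_of_nonneg (hterm p.1)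
        calc K' ≤ v p.1 * w p.1 := hi
          _ ≤ ∑ j, v j * w j :=
              Finset.single_le_sum (fun j _ => hterm j) (Finset.mem_univ p.1)
      have h1 : μ (A p) * μ (A p) ≤
          (μ.prod μ) {q : (Fin d → ℝ) × (Fin d → ℝ) | K' ≤ ∑ i, q.1 i * q.2 i} := by
        rw [← Measure.prod_prod]
        exact measure_mono hsub
      -- Markov inequality for the product measure
      have h2 : ENNReal.ofReal (Real.exp (t * K')) *
          (μ.prod μ) {q : (Fin d → ℝ) × (Fin d → ℝ) | K' ≤ ∑ i, q.1 i * q.2 i} ≤ C := by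
        have hsub2 : {q : (Fin d → ℝ) × (Fin d → ℝ) | K' ≤ ∑ i, q.1 i * q.2 i} ⊆
            {q : (Fin d → ℝ) × (Fin d → ℝ) | ENNReal.ofReal (Real.exp (t * K')) ≤
              ENNReal.ofReal (Real.exp (t * ∑ i, q.1 i * q.2 i))} := by
          intro q hq
          exact ENNReal.ofReal_le_ofReal (Real.exp_le_exp.2 (mul_le_mul_of_nonneg_left hq ht))
        refine le_trans (mul_le_mul_right (measure_mono hsub2) _) ?_
        refine le_trans (mul_meas_ge_le_lintegral₀ hfmeas.aemeasurable _) (le_of_eq hprod)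
      have ha0 : ENNReal.ofReal (Real.exp (t * K')) ≠ 0 := by
        simp [Real.exp_pos]
      have hatop : ENNReal.ofReal (Real.exp (t * K')) ≠ ⊤ := ENNReal.ofReal_ne_top
      have h3 : (μ.prod μ) {q : (Fin d → ℝ) × (Fin d → ℝ) | K' ≤ ∑ i, q.1 i * q.2 i} ≤
          C * ENNReal.ofReal (Real.exp (-(t * K'))) := by
        have h2' : (μ.prod μ) {q : (Fin d → ℝ) × (Fin d → ℝ) | K' ≤ ∑ i, q.1 i * q.2 i} *
            ENNReal.ofReal (Real.exp (t * K')) ≤ C := by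
          rw [mul_comm]; exact h2
        have := (ENNReal.le_div_iff_mul_le (Or.inl ha0) (Or.inl hatop)).2 h2'
        refine this.trans (le_of_eq ?_)
        rw [ENNReal.div_eq_inv_mul, mul_comm]
        congr 1
        rw [← ENNReal.ofReal_inv_of_pos (Real.exp_pos _), ← Real.exp_neg]
      have h4 : μ (A p) ≤ (C * ENNReal.ofReal (Real.exp (-(t * K')))) ^ (1/2 : ℝ) := by
        have hsq : ∀ x : ENNReal, (x * x) ^ (1/2 : ℝ) = x := by
          intro x
          have : x * x = x ^ ((2 : ℕ) : ℝ) := by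
            rw [ENNReal.rpow_natCast]; ring
          rw [this, ← ENNReal.rpow_mul]
          norm_num
        calc μ (A p) = (μ (A p) * μ (A p)) ^ (1/2 : ℝ) := (hsq _).symm
          _ ≤ (C * ENNReal.ofReal (Real.exp (-(t * K')))) ^ (1/2 : ℝ) :=
              ENNReal.rpow_le_rpow (h1.trans h3) (by norm_num)
      refine h4.trans (le_of_eq ?_)
      rw [ENNReal.mul_rpow_of_nonneg _ _ (by norm_num : (0:ℝ) ≤ 1/2)]
      congr 1
      rw [ENNReal.ofReal_rpow_of_pos (Real.exp_pos _),
        Real.rpow_def_of_pos (Real.exp_pos _), Real.log_exp]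
      congr 1
      rw [ht_def, hK'_def]
      field_simp
      ring
    -- sum over all sign patterns
    calc μ {v : Fin d → ℝ | K ≤ ∑ i, v i ^ 2} ≤ μ (⋃ p, A p) := measure_mono hcover
      _ ≤ ∑ p : Fin d × (Fin d → Bool), μ (A p) := measure_iUnion_fintype_le μ A
      _ ≤ ∑ _p : Fin d × (Fin d → Bool),
            C ^ (1/2 : ℝ) * ENNReal.ofReal (Real.exp (-(2 * lam) * K)) :=
          Finset.sum_le_sum fun p _ => hbound p
      _ = (Fintype.card (Fin d × (Fin d → Bool)) : ENNReal) * C ^ (1/2 : ℝ) *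
            ENNReal.ofReal (Real.exp (-(2 * lam) * K)) := by
          rw [Finset.sum_const, Finset.card_univ, nsmul_eq_mul, mul_assoc]
  -- now sum up the layers
  set D : ENNReal := (Fintype.card (Fin d × (Fin d → Bool)) : ENNReal) * C ^ (1/2 : ℝ) with hD_def
  have hDlt : D < ⊤ :=
    ENNReal.mul_lt_top (ENNReal.natCast_lt_top _) (ENNReal.rpow_lt_top_of_nonneg (by norm_num) hC.ne)
  have hSmeas : ∀ n : ℕ, MeasurableSet {v : Fin d → ℝ | (n : ℝ) ≤ ∑ i, v i ^ 2} :=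
    fun n => measurableSet_le measurable_const
      (Finset.measurable_sum _ fun i _ => (measurable_pi_apply i).pow measurable_const)
  have hpt : ∀ v : Fin d → ℝ, ENNReal.ofReal (Real.exp (lam * ∑ i, v i ^ 2)) ≤
      ∑' n : ℕ, Set.indicator {v : Fin d → ℝ | (n : ℝ) ≤ ∑ i, v i ^ 2}
        (fun _ => ENNReal.ofReal (Real.exp (lam * (n + 1)))) v := by
    intro v
    have hs0 : 0 ≤ ∑ i, v i ^ 2 := Finset.sum_nonneg fun i _ => sq_nonneg _
    set n₀ : ℕ := ⌊∑ i, v i ^ 2⌋₊ with hn₀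
    have h1 : ENNReal.ofReal (Real.exp (lam * ∑ i, v i ^ 2)) ≤
        Set.indicator {v : Fin d → ℝ | (n₀ : ℝ) ≤ ∑ i, v i ^ 2}
          (fun _ => ENNReal.ofReal (Real.exp (lam * (n₀ + 1)))) v := by
      rw [Set.indicator_of_mem
        (show v ∈ {v : Fin d → ℝ | (n₀ : ℝ) ≤ ∑ i, v i ^ 2} from Nat.floor_le hs0)]
      refine ENNReal.ofReal_le_ofReal (Real.exp_le_exp.2 ?_)
      have := Nat.lt_floor_add_one (∑ i, v i ^ 2)
      nlinarith
    exact h1.trans (ENNReal.le_tsum n₀)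
  have hr1 : ENNReal.ofReal (Real.exp (-lam)) < 1 := by
    rw [← ENNReal.ofReal_one]
    exact ENNReal.ofReal_lt_ofReal_iff_of_nonneg (Real.exp_pos _).le |>.2
      (Real.exp_lt_one_iff.2 (by linarith))
  calc (∫⁻ v, ENNReal.ofReal (Real.exp (lam * ∑ i, v i ^ 2)) ∂μ)
      ≤ ∫⁻ v, ∑' n : ℕ, Set.indicator {v : Fin d → ℝ | (n : ℝ) ≤ ∑ i, v i ^ 2}
          (fun _ => ENNReal.ofReal (Real.exp (lam * (n + 1)))) v ∂μ := lintegral_mono hpt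
    _ = ∑' n : ℕ, ∫⁻ v, Set.indicator {v : Fin d → ℝ | (n : ℝ) ≤ ∑ i, v i ^ 2}
          (fun _ => ENNReal.ofReal (Real.exp (lam * (n + 1)))) v ∂μ :=
        lintegral_tsum fun n => (measurable_const.indicator (hSmeas n)).aemeasurable
    _ = ∑' n : ℕ, ENNReal.ofReal (Real.exp (lam * (n + 1))) *
          μ {v : Fin d → ℝ | (n : ℝ) ≤ ∑ i, v i ^ 2} :=
        tsum_congr fun n => lintegral_indicator_const (hSmeas n) _
    _ ≤ ∑' n : ℕ, ENNReal.ofReal (Real.exp (lam * (n + 1))) *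
          (D * ENNReal.ofReal (Real.exp (-(2 * lam) * n))) :=
        ENNReal.tsum_le_tsum fun n =>
          mul_le_mul_right (tail n (Nat.cast_nonneg n)) _
    _ = ∑' n : ℕ, (D * ENNReal.ofReal (Real.exp lam)) * ENNReal.ofReal (Real.exp (-lam)) ^ n := by
        refine tsum_congr fun n => ?_
        have e1 : Real.exp (lam * (n + 1)) * Real.exp (-(2 * lam) * n) =
            Real.exp lam * Real.exp (-lam) ^ n := by
          rw [← Real.exp_nat_mul, ← Real.exp_add, ← Real.exp_add, Real.exp_eq_exp]
          ring
        have key : ENNReal.ofReal (Real.exp (lam * (n + 1))) *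
            ENNReal.ofReal (Real.exp (-(2 * lam) * n)) =
            ENNReal.ofReal (Real.exp lam) * ENNReal.ofReal (Real.exp (-lam)) ^ n := by
          rw [← ENNReal.ofReal_mul (Real.exp_pos _).le, e1,
            ENNReal.ofReal_mul (Real.exp_pos _).le, ENNReal.ofReal_pow (Real.exp_pos _).le]
        rw [mul_left_comm, key, ← mul_assoc]
    _ = (D * ENNReal.ofReal (Real.exp lam)) * ∑' n : ℕ, ENNReal.ofReal (Real.exp (-lam)) ^ n :=
        ENNReal.tsum_mul_left
    _ < ⊤ := by
        rw [ENNReal.tsum_geometric]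
        refine ENNReal.mul_lt_top (ENNReal.mul_lt_top hDlt ENNReal.ofReal_lt_top) ?_
        exact ENNReal.inv_lt_top.2 (tsub_pos_iff_lt.2 hr1)
end
end
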